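/- arXiv:2112.10395 — 2 statements merged into one kernel-verified Lean document; each statement's English description precedes it below -/
import Mathlib

section
/- Let H be a nonempty simple graph. There exists a connected simple graph whose three metric subgraphs (central, annular, and peripheral subgraphs) are all isomorphic to H if and only if either H is disconnected, or H is connected and rad(H) ≥ 4. -/
/-- Eccentricity of a vertex in a (finite connected) simple graph:
the maximum distance from `v` to any vertex. -/
noncomputable def SimpleGraph.mecc {V : Type*} (G : SimpleGraph V) (v : V) : ℕ :=
  sSup (Set.range (G.dist v))

/-- Radius: the minimum eccentricity. -/
noncomputable def SimpleGraph.mrad {V : Type*} (G : SimpleGraph V) : ℕ :=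
  sInf (Set.range G.mecc)

/-- Diameter: the maximum eccentricity. -/
noncomputable def SimpleGraph.mdiam {V : Type*} (G : SimpleGraph V) : ℕ :=
  sSup (Set.range G.mecc)

/-- The center: the set of vertices of minimum eccentricity. -/
noncomputable def SimpleGraph.mcenter {V : Type*} (G : SimpleGraph V) : Set V :=
  {v | G.mecc v = G.mrad}

/-- The annulus: the set of vertices of intermediate eccentricity. -/
noncomputable def SimpleGraph.mannulus {V : Type*} (G : SimpleGraph V) : Set V :=
  {v | G.mrad < G.mecc v ∧ G.mecc v < G.mdiam}

/-- The periphery: the set of vertices of maximum eccentricity. -/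
noncomputable def SimpleGraph.mperiphery {V : Type*} (G : SimpleGraph V) : Set V :=
  {v | G.mecc v = G.mdiam}

namespace SimpleGraph

variable {V V' : Type*} {G : SimpleGraph V} {G' : SimpleGraph V'}

lemma hom_dist_le (f : G →g G') {u v : V} (h : G.Reachable u v) :
    G'.dist (f u) (f v) ≤ G.dist u v := by
  obtain ⟨p, hp⟩ := h.exists_walk_length_eq_dist
  calc G'.dist (f u) (f v) ≤ (p.map f).length := dist_le _
    _ = p.length := by simp
    _ = G.dist u v := hp

lemma iso_dist_eq (f : G ≃g G') (u v : V) : G'.dist (f u) (f v) = G.dist u v := by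
  by_cases h : G.Reachable u v
  · refine le_antisymm (hom_dist_le f.toHom h) ?_
    have h2 := hom_dist_le (u := f u) (v := f v) f.symm.toHom
      ((Iso.reachable_iff (φ := f)).mpr h)
    simpa using h2
  · rw [dist_eq_zero_of_not_reachable h,
      dist_eq_zero_of_not_reachable (fun hr => h (Iso.reachable_iff.mp hr))]

section fintype
variable [Fintype V]

lemma dist_le_mecc (v u : V) : G.dist v u ≤ G.mecc v :=
  le_csSup (Set.finite_range _).bddAbove ⟨u, rfl⟩

lemma mecc_le [Nonempty V] {v : V} {k : ℕ} (h : ∀ u, G.dist v u ≤ k) : G.mecc v ≤ k :=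
  csSup_le (Set.range_nonempty _) (by rintro x ⟨u, rfl⟩; exact h u)

lemma exists_dist_eq_mecc [Nonempty V] (v : V) : ∃ u, G.dist v u = G.mecc v :=
  Nat.sSup_mem (Set.range_nonempty _) (Set.finite_range _).bddAbove

lemma mrad_le_mecc (v : V) : G.mrad ≤ G.mecc v := Nat.sInf_le ⟨v, rfl⟩

lemma mecc_le_mdiam (v : V) : G.mecc v ≤ G.mdiam :=
  le_csSup (Set.finite_range _).bddAbove ⟨v, rfl⟩

lemma exists_mecc_eq_mrad [Nonempty V] : ∃ v : V, G.mecc v = G.mrad :=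
  Nat.sInf_mem (Set.range_nonempty _)

lemma exists_mecc_eq_mdiam [Nonempty V] : ∃ v : V, G.mecc v = G.mdiam :=
  Nat.sSup_mem (Set.range_nonempty _) (Set.finite_range _).bddAbove

lemma mdiam_le_two_mul_mrad [Nonempty V] (hconn : G.Connected) : G.mdiam ≤ 2 * G.mrad := by
  obtain ⟨c, hc⟩ := exists_mecc_eq_mrad (G := G)
  have key : ∀ v : V, G.mecc v ≤ 2 * G.mrad := by
    intro v
    refine mecc_le fun u => ?_
    calc G.dist v u ≤ G.dist v c + G.dist c u := hconn.dist_triangle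
      _ ≤ G.mecc c + G.mecc c := by
          gcongr
          · rw [dist_comm]; exact dist_le_mecc c v
          · exact dist_le_mecc c u
      _ = 2 * G.mrad := by rw [hc]; ring
  exact csSup_le (Set.range_nonempty _) (by rintro x ⟨v, rfl⟩; exact key v)

variable [Fintype V']

lemma iso_mecc_eq (f : G ≃g G') (v : V) : G'.mecc (f v) = G.mecc v := by
  unfold mecc
  congr 1
  have hfun : G'.dist (f v) = G.dist v ∘ ⇑f.symm := by
    funext u
    have := iso_dist_eq f v (f.symm u)
    simpa using this
  rw [hfun, Function.Surjective.range_comp (EquivLike.surjective f.symm)]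

lemma iso_mrad_eq (f : G ≃g G') : G'.mrad = G.mrad := by
  unfold mrad
  congr 1
  have hfun : G'.mecc = G.mecc ∘ ⇑f.symm := by
    funext u
    have := iso_mecc_eq f (f.symm u)
    simpa using this
  rw [hfun, Function.Surjective.range_comp (EquivLike.surjective f.symm)]

lemma iso_mdiam_eq (f : G ≃g G') : G'.mdiam = G.mdiam := by
  unfold mdiam
  congr 1
  have hfun : G'.mecc = G.mecc ∘ ⇑f.symm := by
    funext u
    have := iso_mecc_eq f (f.symm u)
    simpa using this
  rw [hfun, Function.Surjective.range_comp (EquivLike.surjective f.symm)]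

end fintype

def isoInduce (f : G ≃g G') {s : Set V} {s' : Set V'} (h : ∀ v, v ∈ s ↔ f v ∈ s') :
    G.induce s ≃g G'.induce s' where
  toEquiv := f.toEquiv.subtypeEquiv h
  map_rel_iff' := f.map_rel_iff

lemma dist_le_induce_dist {s : Set V} {u v : ↥s} (h : (G.induce s).Reachable u v) :
    G.dist ↑u ↑v ≤ (G.induce s).dist u v :=
  hom_dist_le (Embedding.induce s).toHom h

lemma le_dist_of_lip (f : V → ℕ) (hf : ∀ a b, G.Adj a b → f b ≤ f a + 1)
    {u v : V} (h : G.Reachable u v) : f v ≤ f u + G.dist u v := by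
  obtain ⟨p, hp⟩ := h.exists_walk_length_eq_dist
  rw [← hp]
  clear hp h
  induction p with
  | nil => simp
  | @cons a b c hab p ih =>
    have := hf _ _ hab
    simp only [Walk.length_cons]
    omega


section construction

variable {W : Type*} (H : SimpleGraph W)

def triple : SimpleGraph (W × Fin 3) where
  Adj x y := (x.2 = y.2 ∧ H.Adj x.1 y.1) ∨ ((x.2 : ℕ) + (y.2 : ℕ) = 1)
    ∨ (x.1 = y.1 ∧ (x.2 : ℕ) + (y.2 : ℕ) = 3)
  symm := by
    refine ⟨?_⟩
    rintro x y (⟨h1, h2⟩ | h | ⟨h1, h2⟩)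
    · exact Or.inl ⟨h1.symm, h2.symm⟩
    · exact Or.inr (Or.inl (by omega))
    · exact Or.inr (Or.inr ⟨h1.symm, by omega⟩)
  loopless := by
    refine ⟨?_⟩
    rintro x (⟨-, h⟩ | h | ⟨-, h⟩)
    · exact H.irrefl h
    · omega
    · omega

lemma triple_adj01 (w w' : W) : (triple H).Adj (w, 0) (w', 1) :=
  Or.inr (Or.inl rfl)

lemma triple_adj10 (w w' : W) : (triple H).Adj (w, 1) (w', 0) :=
  ((triple H).adj_symm (triple_adj01 H w' w))

lemma triple_adj12 (w : W) : (triple H).Adj (w, 1) (w, 2) :=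
  Or.inr (Or.inr ⟨rfl, rfl⟩)

lemma triple_adj_same (w w' : W) (i : Fin 3) :
    (triple H).Adj (w, i) (w', i) ↔ H.Adj w w' := by
  constructor
  · rintro (⟨-, h⟩ | h | ⟨-, h⟩)
    · exact h
    · exact absurd (show (i : ℕ) + (i : ℕ) = 1 from h) (by omega)
    · exact absurd (show (i : ℕ) + (i : ℕ) = 3 from h) (by omega)
  · intro h; exact Or.inl ⟨rfl, h⟩

lemma triple_preconnected : (triple H).Preconnected := by
  have h1 : ∀ x y : W, (triple H).Reachable (x, 1) (y, 1) := fun x y =>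
    (Adj.reachable (triple_adj10 H x x)).trans (Adj.reachable (triple_adj01 H x y))
  have hto1 : ∀ (x : W) (i : Fin 3), (triple H).Reachable (x, i) (x, 1) := by
    intro x i
    fin_cases i
    · exact Adj.reachable (triple_adj01 H x x)
    · exact Reachable.refl _
    · exact (Adj.reachable (triple_adj12 H x)).symm
  rintro ⟨x, i⟩ ⟨y, j⟩
  exact ((hto1 x i).trans (h1 x y)).trans (hto1 y j).symm

lemma triple_connected [Nonempty W] : (triple H).Connected :=
  ⟨triple_preconnected H⟩

lemma adj_dist_le {V : Type*} {G : SimpleGraph V} {a b : V} (h : G.Adj a b) :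
    G.dist a b ≤ 1 := (dist_eq_one_iff_adj.mpr h).le

lemma triple_dist_ub1 [Nonempty W] (w x : W) (j : Fin 3) :
    (triple H).dist (w, 1) (x, j) ≤ 3 := by
  have hc := triple_connected H
  fin_cases j
  · calc (triple H).dist (w, 1) (x, 0) ≤ 1 := adj_dist_le (triple_adj10 H w x)
      _ ≤ 3 := by omega
  · calc (triple H).dist (w, 1) (x, 1)
        ≤ (triple H).dist (w, 1) (x, 0) + (triple H).dist (x, 0) (x, 1) := hc.dist_triangle
      _ ≤ 1 + 1 := add_le_add (adj_dist_le (triple_adj10 H w x)) (adj_dist_le (triple_adj01 H x x))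
      _ ≤ 3 := by omega
  · calc (triple H).dist (w, 1) (x, 2)
        ≤ (triple H).dist (w, 1) (x, 1) + (triple H).dist (x, 1) (x, 2) := hc.dist_triangle
      _ ≤ (1 + 1) + 1 := by
          refine add_le_add ?_ (adj_dist_le (triple_adj12 H x))
          calc (triple H).dist (w, 1) (x, 1)
              ≤ (triple H).dist (w, 1) (x, 0) + (triple H).dist (x, 0) (x, 1) := hc.dist_triangle
            _ ≤ 1 + 1 := add_le_add (adj_dist_le (triple_adj10 H w x)) (adj_dist_le (triple_adj01 H x x))
      _ ≤ 3 := by omega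

lemma triple_dist_ub0 [Nonempty W] (w x : W) (j : Fin 3) :
    (triple H).dist (w, 0) (x, j) ≤ 2 := by
  have hc := triple_connected H
  fin_cases j
  · calc (triple H).dist (w, 0) (x, 0)
        ≤ (triple H).dist (w, 0) (w, 1) + (triple H).dist (w, 1) (x, 0) := hc.dist_triangle
      _ ≤ 1 + 1 := add_le_add (adj_dist_le (triple_adj01 H w w)) (adj_dist_le (triple_adj10 H w x))
  · calc (triple H).dist (w, 0) (x, 1) ≤ 1 := adj_dist_le (triple_adj01 H w x)
      _ ≤ 2 := by omega
  · calc (triple H).dist (w, 0) (x, 2)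
        ≤ (triple H).dist (w, 0) (x, 1) + (triple H).dist (x, 1) (x, 2) := hc.dist_triangle
      _ ≤ 1 + 1 := add_le_add (adj_dist_le (triple_adj01 H w x)) (adj_dist_le (triple_adj12 H x))

lemma triple_dist_ub2 [Nonempty W] (w x : W) (j : Fin 3) :
    (triple H).dist (w, 2) (x, j) ≤ 4 := by
  have hc := triple_connected H
  calc (triple H).dist (w, 2) (x, j)
      ≤ (triple H).dist (w, 2) (w, 1) + (triple H).dist (w, 1) (x, j) := hc.dist_triangle
    _ ≤ 1 + 3 := add_le_add (adj_dist_le ((triple H).adj_symm (triple_adj12 H w))) (triple_dist_ub1 H w x j)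

open Classical in
noncomputable def Df (w x : W) : ℕ := if H.Reachable w x then min (H.dist w x) 4 else 4

lemma Df_self (w : W) : Df H w w = 0 := by
  simp [Df, dist_self, Reachable.refl]

lemma Df_lip {w x y : W} (h : H.Adj x y) : Df H w y ≤ Df H w x + 1 := by
  by_cases hr : H.Reachable w x
  · have hry : H.Reachable w y := hr.trans h.reachable
    have hd : H.dist w y ≤ H.dist w x + 1 := by
      obtain ⟨p, hp⟩ := hr.exists_walk_length_eq_dist
      calc H.dist w y ≤ (p.concat h).length := dist_le _
        _ = p.length + 1 := Walk.length_concat _ _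
        _ = H.dist w x + 1 := by rw [hp]
    simp only [Df, if_pos hr, if_pos hry]
    omega
  · have hry : ¬ H.Reachable w y := fun hry => hr (hry.trans h.symm.reachable)
    simp [Df, hr, hry]

noncomputable def g0 (w : W) : W × Fin 3 → ℕ := fun x =>
  if x.2 = 0 then min (Df H w x.1) 2 else if x.2 = 1 then 1 else 2

noncomputable def g1 (w : W) : W × Fin 3 → ℕ := fun x =>
  if x.2 = 0 then 1 else if x.2 = 1 then min (Df H w x.1) 2 else min (Df H w x.1 + 1) 3

noncomputable def g2 (w : W) : W × Fin 3 → ℕ := fun x =>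
  if x.2 = 0 then 2 else if x.2 = 1 then min (Df H w x.1 + 1) 3 else min (Df H w x.1) 4

lemma lip0 (w : W) : ∀ a b, (triple H).Adj a b → g0 H w b ≤ g0 H w a + 1 := by
  rintro ⟨x, i⟩ ⟨y, j⟩ h
  obtain ⟨h1, h2⟩ | h1 | ⟨h1, h2⟩ := h
  · replace h1 : i = j := h1
    subst h1
    replace h2 : H.Adj x y := h2
    have hD := Df_lip H (w := w) h2
    simp only [g0]
    split_ifs <;> omega
  · replace h1 : (i : ℕ) + (j : ℕ) = 1 := h1
    simp only [g0]
    have hi := i.isLt; have hj := j.isLt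
    have e2 : ¬ ((i:ℕ) = 2 ∨ (j:ℕ) = 2) := by omega
    split_ifs with p1 p2 p3 p4 p5 p6 p7 p8 <;>
      first
        | omega
        | (exfalso; revert h1; simp_all [Fin.ext_iff]; omega)
  · replace h2 : (i : ℕ) + (j : ℕ) = 3 := h2
    replace h1 : x = y := h1
    subst h1
    simp only [g0]
    have hi := i.isLt; have hj := j.isLt
    split_ifs <;> simp only [Fin.ext_iff, Fin.val_zero, Fin.val_one, Fin.val_two] at * <;> omega

lemma lip1 (w : W) : ∀ a b, (triple H).Adj a b → g1 H w b ≤ g1 H w a + 1 := by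
  rintro ⟨x, i⟩ ⟨y, j⟩ h
  obtain ⟨h1, h2⟩ | h1 | ⟨h1, h2⟩ := h
  · replace h1 : i = j := h1
    subst h1
    replace h2 : H.Adj x y := h2
    have hD := Df_lip H (w := w) h2
    simp only [g1]
    split_ifs <;> omega
  · replace h1 : (i : ℕ) + (j : ℕ) = 1 := h1
    simp only [g1]
    have hi := i.isLt; have hj := j.isLt
    have e2 : ¬ ((i:ℕ) = 2 ∨ (j:ℕ) = 2) := by omega
    split_ifs with p1 p2 p3 p4 p5 p6 p7 p8 <;>
      first
        | omega
        | (exfalso; revert h1; simp_all [Fin.ext_iff]; omega)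
  · replace h2 : (i : ℕ) + (j : ℕ) = 3 := h2
    replace h1 : x = y := h1
    subst h1
    simp only [g1]
    have hi := i.isLt; have hj := j.isLt
    split_ifs <;> simp only [Fin.ext_iff, Fin.val_zero, Fin.val_one, Fin.val_two] at * <;> omega

lemma lip2 (w : W) : ∀ a b, (triple H).Adj a b → g2 H w b ≤ g2 H w a + 1 := by
  rintro ⟨x, i⟩ ⟨y, j⟩ h
  obtain ⟨h1, h2⟩ | h1 | ⟨h1, h2⟩ := h
  · replace h1 : i = j := h1
    subst h1
    replace h2 : H.Adj x y := h2
    have hD := Df_lip H (w := w) h2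
    simp only [g2]
    split_ifs <;> omega
  · replace h1 : (i : ℕ) + (j : ℕ) = 1 := h1
    simp only [g2]
    have hi := i.isLt; have hj := j.isLt
    have e2 : ¬ ((i:ℕ) = 2 ∨ (j:ℕ) = 2) := by omega
    split_ifs with p1 p2 p3 p4 p5 p6 p7 p8 <;>
      first
        | omega
        | (exfalso; revert h1; simp_all [Fin.ext_iff]; omega)
  · replace h2 : (i : ℕ) + (j : ℕ) = 3 := h2
    replace h1 : x = y := h1
    subst h1
    simp only [g2]
    have hi := i.isLt; have hj := j.isLt
    split_ifs <;> simp only [Fin.ext_iff, Fin.val_zero, Fin.val_one, Fin.val_two] at * <;> omega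

lemma triple_dist_lb0 (w : W) : 2 ≤ (triple H).dist (w, 0) (w, 2) := by
  have h := le_dist_of_lip (g0 H w) (lip0 H w) (triple_preconnected H (w, 0) (w, 2))
  have e1 : g0 H w (w, 2) = 2 := by simp [g0]
  have e2 : g0 H w (w, 0) = 0 := by simp [g0, Df_self]
  omega

lemma triple_dist_lb1 (w w' : W) (hw : Df H w w' = 4) :
    3 ≤ (triple H).dist (w, 1) (w', 2) := by
  have h := le_dist_of_lip (g1 H w) (lip1 H w) (triple_preconnected H (w, 1) (w', 2))
  have e1 : g1 H w (w', 2) = 3 := by simp [g1, hw]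
  have e2 : g1 H w (w, 1) = 0 := by simp [g1, Df_self]
  omega

lemma triple_dist_lb2 (w w' : W) (hw : Df H w w' = 4) :
    4 ≤ (triple H).dist (w, 2) (w', 2) := by
  have h := le_dist_of_lip (g2 H w) (lip2 H w) (triple_preconnected H (w, 2) (w', 2))
  have e1 : g2 H w (w', 2) = 4 := by simp [g2, hw]
  have e2 : g2 H w (w, 2) = 0 := by simp [g2, Df_self]
  omega

section ecc
variable [Fintype W] [Nonempty W]

lemma triple_mecc0 (w : W) : (triple H).mecc (w, 0) = 2 := by
  refine le_antisymm (mecc_le ?_) (le_trans (triple_dist_lb0 H w) (dist_le_mecc _ _))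
  rintro ⟨x, j⟩
  exact triple_dist_ub0 H w x j

lemma triple_mecc1 (w w' : W) (hw : Df H w w' = 4) : (triple H).mecc (w, 1) = 3 := by
  refine le_antisymm (mecc_le ?_) (le_trans (triple_dist_lb1 H w w' hw) (dist_le_mecc _ _))
  rintro ⟨x, j⟩
  exact triple_dist_ub1 H w x j

lemma triple_mecc2 (w w' : W) (hw : Df H w w' = 4) : (triple H).mecc (w, 2) = 4 := by
  refine le_antisymm (mecc_le ?_) (le_trans (triple_dist_lb2 H w w' hw) (dist_le_mecc _ _))
  rintro ⟨x, j⟩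
  exact triple_dist_ub2 H w x j

variable (hH : ∀ w : W, ∃ w', Df H w w' = 4)
include hH

lemma triple_mecc_eq (x : W) (i : Fin 3) : (triple H).mecc (x, i) = (i : ℕ) + 2 := by
  obtain ⟨w', hw⟩ := hH x
  fin_cases i
  · simpa using triple_mecc0 H x
  · simpa using triple_mecc1 H x w' hw
  · simpa using triple_mecc2 H x w' hw

lemma triple_mrad_eq : (triple H).mrad = 2 := by
  obtain ⟨w0⟩ := (inferInstance : Nonempty W)
  refine le_antisymm (Nat.sInf_le ⟨(w0, 0), by simpa using triple_mecc_eq H hH w0 0⟩) ?_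
  refine le_csInf ⟨_, ⟨(w0, 0), rfl⟩⟩ ?_
  rintro b ⟨⟨x, i⟩, rfl⟩
  rw [triple_mecc_eq H hH x i]
  omega

lemma triple_mdiam_eq : (triple H).mdiam = 4 := by
  obtain ⟨w0⟩ := (inferInstance : Nonempty W)
  refine le_antisymm ?_ ?_
  · refine csSup_le ⟨_, ⟨(w0, 0), rfl⟩⟩ ?_
    rintro b ⟨⟨x, i⟩, rfl⟩
    rw [triple_mecc_eq H hH x i]
    have : (i : ℕ) < 3 := i.isLt
    omega
  · refine le_csSup (Set.finite_range _).bddAbove ⟨(w0, 2), ?_⟩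
    simpa using triple_mecc_eq H hH w0 2

lemma triple_mcenter_eq : (triple H).mcenter = {x : W × Fin 3 | x.2 = 0} := by
  ext ⟨x, i⟩
  simp only [mcenter, Set.mem_setOf_eq, triple_mrad_eq H hH, triple_mecc_eq H hH x i]
  fin_cases i <;> simp

lemma triple_mannulus_eq : (triple H).mannulus = {x : W × Fin 3 | x.2 = 1} := by
  ext ⟨x, i⟩
  simp only [mannulus, Set.mem_setOf_eq, triple_mrad_eq H hH, triple_mdiam_eq H hH,
    triple_mecc_eq H hH x i]
  fin_cases i <;> simp

lemma triple_mperiphery_eq : (triple H).mperiphery = {x : W × Fin 3 | x.2 = 2} := by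
  ext ⟨x, i⟩
  simp only [mperiphery, Set.mem_setOf_eq, triple_mdiam_eq H hH, triple_mecc_eq H hH x i]
  fin_cases i <;> simp

end ecc

def layerEquiv (i₀ : Fin 3) : {x : W × Fin 3 | x.2 = i₀} ≃ W where
  toFun a := a.1.1
  invFun w := ⟨(w, i₀), rfl⟩
  left_inv := by rintro ⟨⟨x, i⟩, hi⟩; simp only [Set.mem_setOf_eq] at hi; subst hi; rfl
  right_inv w := rfl

def layerIso (i₀ : Fin 3) : (triple H).induce {x : W × Fin 3 | x.2 = i₀} ≃g H where
  toEquiv := layerEquiv i₀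
  map_rel_iff' := by
    rintro ⟨⟨x, i⟩, hi⟩ ⟨⟨y, j⟩, hj⟩
    simp only [Set.mem_setOf_eq] at hi hj
    obtain rfl : j = i := by rw [hi, hj]
    exact (triple_adj_same H x y _).symm


section final
variable {W : Type*} [Fintype W] [Nonempty W] (H : SimpleGraph W)

noncomputable def finGraph : SimpleGraph (Fin (Fintype.card (W × Fin 3))) where
  Adj i j := (triple H).Adj ((Fintype.equivFin (W × Fin 3)).symm i)
    ((Fintype.equivFin (W × Fin 3)).symm j)
  symm := ⟨fun a b h => (triple H).adj_symm h⟩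
  loopless := ⟨fun a h => (triple H).irrefl h⟩

noncomputable def finGraphIso : triple H ≃g finGraph H where
  toEquiv := Fintype.equivFin (W × Fin 3)
  map_rel_iff' := by
    intro a b
    show (triple H).Adj ((Fintype.equivFin (W × Fin 3)).symm ((Fintype.equivFin (W × Fin 3)) a))
      ((Fintype.equivFin (W × Fin 3)).symm ((Fintype.equivFin (W × Fin 3)) b)) ↔ _
    rw [Equiv.symm_apply_apply, Equiv.symm_apply_apply]

end final

end construction

end SimpleGraph

open SimpleGraph

theorem exists_graph_with_metric_subgraphs_iso_to_H_iff
    {W : Type*} [Fintype W] [Nonempty W] (H : SimpleGraph W) :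
    (∃ (n : ℕ) (G : SimpleGraph (Fin n)), G.Connected ∧
        Nonempty (G.induce G.mcenter ≃g H) ∧
        Nonempty (G.induce G.mannulus ≃g H) ∧
        Nonempty (G.induce G.mperiphery ≃g H)) ↔
      (¬ H.Connected ∨ (H.Connected ∧ 4 ≤ H.mrad)) := by
  constructor
  · rintro ⟨n, G, hconn, ⟨fc⟩, ⟨fa⟩, ⟨fp⟩⟩
    by_contra hcon
    rw [not_or, not_not, not_and] at hcon
    obtain ⟨hHc, h4⟩ := hcon
    have hrad3 : H.mrad ≤ 3 := by have := h4 hHc; omega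
    haveI : Nonempty (Fin n) := hconn.nonempty
    obtain ⟨w, hw⟩ := exists_mecc_eq_mrad (G := H)
    set P := G.mperiphery with hPdef
    set hp : ↥P := fp.symm w with hhp
    have hfp : fp hp = w := fp.apply_symm_apply w
    have hpP : G.mecc ↑hp = G.mdiam := hp.2
    have hdistP : ∀ q : ↥P, G.dist ↑hp ↑q ≤ 3 := by
      intro q
      have hre : (G.induce P).Reachable hp q :=
        (Iso.reachable_iff (φ := fp)).mp (hHc (fp hp) (fp q))
      refine le_trans (dist_le_induce_dist hre) ?_
      have heq : (G.induce P).dist hp q = H.dist (fp hp) (fp q) := (iso_dist_eq fp hp q).symm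
      rw [heq, hfp]
      calc H.dist w (fp q) ≤ H.mecc w := dist_le_mecc w _
        _ ≤ 3 := by rw [hw]; exact hrad3
    obtain ⟨z, hz⟩ := exists_dist_eq_mecc (G := G) (hp : Fin n)
    have hzP : z ∈ P := by
      have h1 : G.mdiam ≤ G.mecc z := by
        rw [← hpP, ← hz, dist_comm]
        exact dist_le_mecc z ↑hp
      exact le_antisymm (mecc_le_mdiam z) h1
    have hdle3 : G.mdiam ≤ 3 := by
      rw [← hpP, ← hz]
      exact hdistP ⟨z, hzP⟩
    obtain ⟨ha1, ha2⟩ := (fa.symm (Classical.arbitrary W)).2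
    have h2r : G.mdiam ≤ 2 * G.mrad := mdiam_le_two_mul_mrad hconn
    omega
  · intro hyp
    have hH : ∀ w : W, ∃ w', Df H w w' = 4 := by
      intro w
      rcases hyp with hnc | ⟨hc, hr⟩
      · obtain ⟨u, v, huv⟩ : ∃ u v, ¬ H.Reachable u v := by
          by_contra hcon
          push_neg at hcon
          exact hnc ⟨fun u v => hcon u v⟩
        by_cases h1 : H.Reachable w u
        · have h2 : ¬ H.Reachable w v := fun h2 => huv (h1.symm.trans h2)
          exact ⟨v, by simp [Df, h2]⟩
        · exact ⟨u, by simp [Df, h1]⟩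
      · obtain ⟨w', hw'⟩ := exists_dist_eq_mecc (G := H) w
        refine ⟨w', ?_⟩
        have h4 : 4 ≤ H.dist w w' := by
          rw [hw']
          exact le_trans hr (mrad_le_mecc w)
        have hre : H.Reachable w w' := hc w w'
        simp only [Df, if_pos hre]
        omega
    refine ⟨Fintype.card (W × Fin 3), finGraph H, ?_, ?_, ?_, ?_⟩
    · exact (Iso.connected_iff (finGraphIso H)).mp (triple_connected H)
    · refine ⟨?_⟩
      have hmem : ∀ v, v ∈ (triple H).mcenter ↔ (finGraphIso H) v ∈ (finGraph H).mcenter := by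
        intro v
        simp only [mcenter, Set.mem_setOf_eq, iso_mecc_eq (finGraphIso H) v,
          iso_mrad_eq (finGraphIso H)]
      have i2 : (triple H).induce (triple H).mcenter ≃g H := by
        rw [triple_mcenter_eq H hH]
        exact layerIso H 0
      exact (isoInduce (finGraphIso H) hmem).symm.trans i2
    · refine ⟨?_⟩
      have hmem : ∀ v, v ∈ (triple H).mannulus ↔ (finGraphIso H) v ∈ (finGraph H).mannulus := by
        intro v
        simp only [mannulus, Set.mem_setOf_eq, iso_mecc_eq (finGraphIso H) v,
          iso_mrad_eq (finGraphIso H), iso_mdiam_eq (finGraphIso H)]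
      have i2 : (triple H).induce (triple H).mannulus ≃g H := by
        rw [triple_mannulus_eq H hH]
        exact layerIso H 1
      exact (isoInduce (finGraphIso H) hmem).symm.trans i2
    · refine ⟨?_⟩
      have hmem : ∀ v, v ∈ (triple H).mperiphery ↔ (finGraphIso H) v ∈ (finGraph H).mperiphery := by
        intro v
        simp only [mperiphery, Set.mem_setOf_eq, iso_mecc_eq (finGraphIso H) v,
          iso_mdiam_eq (finGraphIso H)]
      have i2 : (triple H).induce (triple H).mperiphery ≃g H := by
        rw [triple_mperiphery_eq H hH]
        exact layerIso H 2
      exact (isoInduce (finGraphIso H) hmem).symm.trans i2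
end

section
/- For a positive integer n, there exists a connected simple graph of order n whose three metric subgraphs (central, annular, and peripheral subgraphs) are all nonempty, connected, and pairwise isomorphic if and only if n ≥ 24 and n is divisible by 3. -/
namespace MetricSubgraphsAux
open SimpleGraph

variable {V : Type*} {W : Type*} {G : SimpleGraph V} {G' : SimpleGraph W} {u v : V}

/-! ### Generic distance lemmas -/

lemma adj_dist_le (h : G.Adj u v) (x : V) : G.dist u x ≤ G.dist v x + 1 := by
  by_cases hr : G.Reachable v x
  · obtain ⟨p, hp⟩ := hr.exists_walk_length_eq_dist
    calc G.dist u x ≤ (SimpleGraph.Walk.cons h p).length := SimpleGraph.dist_le _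
      _ = G.dist v x + 1 := by simp [hp]
  · have : ¬ G.Reachable u x := fun hr' => hr ((h.symm.reachable).trans hr')
    simp [SimpleGraph.dist_eq_zero_of_not_reachable this]

lemma dist_getVert_getVert_le (p : G.Walk u v) :
    ∀ i j : ℕ, i ≤ j → G.dist (p.getVert i) (p.getVert j) ≤ j - i := by
  induction p with
  | nil => intro i j _; simp [SimpleGraph.Walk.getVert, SimpleGraph.dist_self]
  | @cons a b c h q ih =>
    intro i j hij
    match i, j with
    | 0, 0 => simp
    | 0, (j+1) =>
      simp only [SimpleGraph.Walk.getVert_zero, SimpleGraph.Walk.getVert_cons_succ]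
      have h1 := adj_dist_le h (q.getVert j)
      have h2 := ih 0 j (Nat.zero_le _)
      simp only [SimpleGraph.Walk.getVert_zero] at h2
      omega
    | (i+1), (j+1) =>
      simp only [SimpleGraph.Walk.getVert_cons_succ]
      have := ih i j (by omega)
      omega

lemma dist_start_getVert_le (p : G.Walk u v) (i : ℕ) : G.dist u (p.getVert i) ≤ i := by
  have := dist_getVert_getVert_le p 0 i (Nat.zero_le _)
  simpa using this

lemma dist_getVert_end_le (p : G.Walk u v) {i : ℕ} (hi : i ≤ p.length) :
    G.dist (p.getVert i) v ≤ p.length - i := by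
  have := dist_getVert_getVert_le p i p.length hi
  simpa [p.getVert_length] using this

lemma geodesic_getVert (hc : G.Connected) (p : G.Walk u v) (hp : p.length = G.dist u v)
    {i : ℕ} (hi : i ≤ p.length) :
    G.dist u (p.getVert i) = i ∧ G.dist (p.getVert i) v = p.length - i := by
  have h1 := dist_start_getVert_le p i
  have h2 := dist_getVert_end_le p hi
  have h3 := hc.dist_triangle (u := u) (v := p.getVert i) (w := v)
  omega

lemma two_le_dist (hc : G.Connected) (hne : u ≠ v) (hna : ¬ G.Adj u v) : 2 ≤ G.dist u v := by
  have h0 : 0 < G.dist u v := hc.pos_dist_of_ne hne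
  have h1 : G.dist u v ≠ 1 := fun h => hna (SimpleGraph.dist_eq_one_iff_adj.mp h)
  omega

lemma succ_le_dist (hc : G.Connected) (hne : u ≠ v) {m : ℕ}
    (h : ∀ w, G.Adj u w → m ≤ G.dist w v) : m + 1 ≤ G.dist u v := by
  obtain ⟨p, hp⟩ := hc.exists_walk_length_eq_dist u v
  cases p with
  | nil => exact absurd rfl hne
  | @cons a b c ha q =>
    have h1 := h _ ha
    have h2 := SimpleGraph.dist_le q
    rw [← hp]
    simp only [SimpleGraph.Walk.length_cons]
    omega

lemma three_le_dist (hc : G.Connected) (hne : u ≠ v) (hna : ¬ G.Adj u v)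
    (h : ∀ w, G.Adj u w → ¬ G.Adj w v) : 3 ≤ G.dist u v := by
  refine succ_le_dist hc hne (fun w hw => two_le_dist hc ?_ (h w hw))
  rintro rfl
  exact hna hw

/-! ### Eccentricity lemmas -/

section FinV
variable [Finite V]

lemma dist_le_mecc (v u : V) : G.dist v u ≤ G.mecc v :=
  le_csSup (Set.finite_range _).bddAbove ⟨u, rfl⟩

lemma exists_dist_eq_mecc [Nonempty V] (v : V) : ∃ u, G.dist v u = G.mecc v :=
  Nat.sSup_mem (Set.range_nonempty (G.dist v)) (Set.finite_range _).bddAbove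

lemma mecc_le_mdiam (v : V) : G.mecc v ≤ G.mdiam :=
  le_csSup (Set.finite_range _).bddAbove ⟨v, rfl⟩

omit [Finite V] in
lemma mrad_le_mecc (v : V) : G.mrad ≤ G.mecc v := Nat.sInf_le ⟨v, rfl⟩

lemma exists_mecc_eq_mdiam [Nonempty V] : ∃ v : V, G.mecc v = G.mdiam :=
  Nat.sSup_mem (Set.range_nonempty G.mecc) (Set.finite_range _).bddAbove

lemma mecc_eq [Nonempty V] (v : V) (e : ℕ) (h1 : ∀ u, G.dist v u ≤ e)
    (h2 : ∃ u, e ≤ G.dist v u) : G.mecc v = e := by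
  refine le_antisymm (csSup_le (Set.range_nonempty _) ?_) ?_
  · rintro _ ⟨u, rfl⟩; exact h1 u
  · obtain ⟨u, hu⟩ := h2; exact hu.trans (dist_le_mecc v u)

end FinV

lemma induce_dist_ge {s : Set V} (hc : (G.induce s).Connected) (x y : s) :
    G.dist x.1 y.1 ≤ (G.induce s).dist x y := by
  obtain ⟨p, hp⟩ := hc.exists_walk_length_eq_dist x y
  have h := SimpleGraph.dist_le (p.map (SimpleGraph.Embedding.induce s).toHom)
  rw [SimpleGraph.Walk.length_map, hp] at h
  exact h

/-! ### Counting lemmas: a connected graph in which every vertex has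
eccentricity at least 4 has at least 8 vertices. -/

lemma card_ge_of_dist {V : Type*} [Fintype V] {G : SimpleGraph V} (hc : G.Connected) (x y : V) :
    G.dist x y + 1 ≤ Fintype.card V := by
  obtain ⟨p, hp⟩ := hc.exists_walk_length_eq_dist x y
  have hinj : Function.Injective (fun i : Fin (G.dist x y + 1) => p.getVert i) := by
    intro i j hij
    have hi := (geodesic_getVert hc p hp (i := i) (by omega)).1
    have hj := (geodesic_getVert hc p hp (i := j) (by omega)).1
    have hij' : p.getVert ↑i = p.getVert ↑j := hij
    apply Fin.ext
    rw [← hi, ← hj, hij']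
  simpa using Fintype.card_le_of_injective _ hinj

lemma lemA {V : Type*} [Fintype V] {G : SimpleGraph V} (hc : G.Connected)
    {ρ : ℕ} (h : ∀ x : V, ∃ y, ρ ≤ G.dist x y) : ρ + 1 + ρ / 2 ≤ Fintype.card V := by
  obtain ⟨x⟩ := hc.nonempty
  obtain ⟨y, hy⟩ := h x
  by_cases hD : ρ + ρ / 2 ≤ G.dist x y
  · have := card_ge_of_dist hc x y
    omega
  · push_neg at hD
    obtain ⟨p, hp⟩ := hc.exists_walk_length_eq_dist x y
    set D := G.dist x y with hDdef
    set s := (D + 1) / 2 with hsdef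
    have hsD : s ≤ D := by omega
    have hms : G.dist x (p.getVert s) = s := (geodesic_getVert hc p hp (by omega)).1
    obtain ⟨z, hz⟩ := h (p.getVert s)
    obtain ⟨q, hq⟩ := hc.exists_walk_length_eq_dist (p.getVert s) z
    set t := G.dist (p.getVert s) z with htdef
    have hst : s < t := by omega
    have hmp : ∀ i : ℕ, i ≤ D → G.dist (p.getVert s) (p.getVert i) ≤ s := by
      intro i hiD
      rcases le_total i s with his | hsi
      · have := dist_getVert_getVert_le p i s his
        rw [SimpleGraph.dist_comm] at this
        omega
      · have := dist_getVert_getVert_le p s i hsi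
        omega
    have hqd : ∀ j : ℕ, j ≤ t → G.dist (p.getVert s) (q.getVert j) = j := by
      intro j hj
      exact (geodesic_getVert hc q hq (by omega)).1
    have hxd : ∀ i : ℕ, i ≤ D → G.dist x (p.getVert i) = i := by
      intro i hi
      exact (geodesic_getVert hc p hp (by omega)).1
    have hinj : Function.Injective
        (Sum.elim (fun i : Fin (D + 1) => p.getVert i)
          (fun j : Fin (t - s) => q.getVert (s + 1 + j))) := by
      rintro (i | i) (j | j) hij <;> simp only [Sum.elim_inl, Sum.elim_inr] at hij
      · have hi := hxd i (by omega)
        have hj := hxd j (by omega)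
        rw [hij] at hi
        exact congrArg Sum.inl (Fin.ext (by omega))
      · exfalso
        have h1 := hmp i (by omega)
        have h2 := hqd (s + 1 + j) (by omega)
        rw [hij] at h1
        omega
      · exfalso
        have h1 := hmp j (by omega)
        have h2 := hqd (s + 1 + i) (by omega)
        rw [← hij] at h1
        omega
      · have hi := hqd (s + 1 + i) (by omega)
        have hj := hqd (s + 1 + j) (by omega)
        rw [hij] at hi
        exact congrArg Sum.inr (Fin.ext (by omega))
    have hcard := Fintype.card_le_of_injective _ hinj
    simp only [Fintype.card_sum, Fintype.card_fin] at hcard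
    omega

lemma lemB {V : Type*} [Fintype V] {G : SimpleGraph V} (hc : G.Connected)
    (hcard : Fintype.card V = 7) (h : ∀ x : V, ∃ y, 4 ≤ G.dist x y) : False := by
  classical
  have h5 : ¬ ∀ x : V, ∃ y, 5 ≤ G.dist x y := by
    intro hh
    have := lemA hc hh
    omega
  push_neg at h5
  obtain ⟨v, hv⟩ := h5
  have hv4 : ∀ y, G.dist v y ≤ 4 := fun y => by have := hv y; omega
  obtain ⟨y₀, hy₀⟩ := h v
  have hvy₀ : G.dist v y₀ = 4 := le_antisymm (hv4 _) hy₀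
  set L : ℕ → Finset V := fun i => Finset.univ.filter (fun x => G.dist v x = i) with hL
  have hmemL : ∀ i (x : V), x ∈ L i ↔ G.dist v x = i := by
    intro i x; simp [hL]
  have hsum : ∑ i ∈ Finset.range 5, (L i).card = 7 := by
    rw [← hcard, ← Finset.card_univ]
    exact (Finset.card_eq_sum_card_fiberwise
      (fun x _ => Finset.mem_range.mpr (by have := hv4 x; omega))).symm
  have hne : ∀ i, i ≤ 4 → (L i).Nonempty := by
    intro i hi
    obtain ⟨p, hp⟩ := hc.exists_walk_length_eq_dist v y₀
    refine ⟨p.getVert i, (hmemL _ _).mpr ?_⟩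
    exact (geodesic_getVert hc p hp (by omega)).1
  have h12 : ∀ i, 1 ≤ i → i ≤ 2 → 2 ≤ (L i).card := by
    intro i h1 h2
    by_contra hlt
    push_neg at hlt
    obtain ⟨w, hw⟩ := Finset.card_eq_one.mp
      (le_antisymm (by omega) (Finset.card_pos.mpr (hne i (by omega))))
    have hwmem : G.dist v w = i := (hmemL i w).mp (hw ▸ Finset.mem_singleton_self w)
    have huniq : ∀ x, G.dist v x = i → x = w := fun x hx =>
      Finset.mem_singleton.mp (hw ▸ (hmemL i x).mpr hx)
    have hbound : ∀ z, G.dist w z ≤ 3 := by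
      intro z
      by_cases hdz : i ≤ G.dist v z
      · obtain ⟨pz, hpz⟩ := hc.exists_walk_length_eq_dist v z
        have hg := geodesic_getVert hc pz hpz (i := i) (by omega)
        have hgw : pz.getVert i = w := huniq _ hg.1
        rw [← hgw]
        have := hv4 z
        omega
      · have htri := hc.dist_triangle (u := w) (v := v) (w := z)
        have hcm : G.dist w v = G.dist v w := SimpleGraph.dist_comm ..
        omega
    obtain ⟨z, hz⟩ := h w
    have := hbound z
    omega
  have hL0 : (L 0).card = 1 := by
    rw [Finset.card_eq_one]
    refine ⟨v, ?_⟩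
    ext x
    simp only [hL, Finset.mem_filter, Finset.mem_univ, true_and, Finset.mem_singleton]
    exact ⟨fun h' => (hc.dist_eq_zero_iff.mp h').symm, fun h' => hc.dist_eq_zero_iff.mpr h'.symm⟩
  have e1 := h12 1 (by omega) (by omega)
  have e2 := h12 2 (by omega) (by omega)
  have e3 := Finset.card_pos.mpr (hne 3 (by omega))
  have e4 := Finset.card_pos.mpr (hne 4 (by omega))
  have hexp : (L 0).card + ((L 1).card + ((L 2).card + ((L 3).card + (L 4).card))) = 7 := by
    have h' := hsum
    rw [Finset.sum_range_succ, Finset.sum_range_succ, Finset.sum_range_succ,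
      Finset.sum_range_succ, Finset.sum_range_one] at h'
    omega
  have hc3 : (L 3).card = 1 := by omega
  have hc4 : (L 4).card = 1 := by omega
  obtain ⟨w, hw⟩ := Finset.card_eq_one.mp hc3
  obtain ⟨z, hz⟩ := Finset.card_eq_one.mp hc4
  have hvw : G.dist v w = 3 := (hmemL 3 w).mp (hw ▸ Finset.mem_singleton_self w)
  have hvz : G.dist v z = 4 := (hmemL 4 z).mp (hz ▸ Finset.mem_singleton_self z)
  have huw : ∀ x, G.dist v x = 3 → x = w := fun x hx =>
    Finset.mem_singleton.mp (hw ▸ (hmemL 3 x).mpr hx)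
  have huz : ∀ x, G.dist v x = 4 → x = z := fun x hx =>
    Finset.mem_singleton.mp (hz ▸ (hmemL 4 x).mpr hx)
  have hwz : G.Adj w z := by
    obtain ⟨pz, hpz⟩ := hc.exists_walk_length_eq_dist v z
    have hlen : pz.length = 4 := by omega
    have hadj : G.Adj (pz.getVert 3) (pz.getVert 4) := pz.adj_getVert_succ (by omega)
    have h3 : pz.getVert 3 = w := huw _ (geodesic_getVert hc pz hpz (by omega)).1
    have h4 : pz.getVert 4 = z := pz.getVert_of_length_le (by omega)
    rw [h3, h4] at hadj
    exact hadj
  obtain ⟨pw, hpw⟩ := hc.exists_walk_length_eq_dist v w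
  have hlw : pw.length = 3 := by omega
  have hvb : G.dist v (pw.getVert 2) = 2 := (geodesic_getVert hc pw hpw (by omega)).1
  have hbw : G.Adj (pw.getVert 2) w := by
    have hadj := pw.adj_getVert_succ (i := 2) (by omega)
    have h3 : pw.getVert 3 = w := pw.getVert_of_length_le (by omega)
    rwa [h3] at hadj
  obtain ⟨pb, hpb⟩ := hc.exists_walk_length_eq_dist v (pw.getVert 2)
  have hlb : pb.length = 2 := by omega
  have hva : G.dist v (pb.getVert 1) = 1 := (geodesic_getVert hc pb hpb (by omega)).1
  have hab : G.Adj (pb.getVert 1) (pw.getVert 2) := by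
    have hadj := pb.adj_getVert_succ (i := 1) (by omega)
    have h2 : pb.getVert 2 = pw.getVert 2 := pb.getVert_of_length_le (by omega)
    rwa [h2] at hadj
  have hfar : ∀ u : V, G.dist (pb.getVert 1) u ≤ 3 := by
    intro u
    have hu4 := hv4 u
    have dab : G.dist (pb.getVert 1) (pw.getVert 2) = 1 :=
      SimpleGraph.dist_eq_one_iff_adj.mpr hab
    have dbw : G.dist (pw.getVert 2) w = 1 := SimpleGraph.dist_eq_one_iff_adj.mpr hbw
    have dwz : G.dist w z = 1 := SimpleGraph.dist_eq_one_iff_adj.mpr hwz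
    have hav : G.dist (pb.getVert 1) v = 1 := by
      rw [SimpleGraph.dist_comm]; exact hva
    rcases (by omega :
        G.dist v u = 0 ∨ G.dist v u = 1 ∨ G.dist v u = 2 ∨ G.dist v u = 3 ∨ G.dist v u = 4)
      with h0 | h1 | h2 | h3 | h4
    · have hvu : v = u := hc.dist_eq_zero_iff.mp h0
      rw [← hvu]
      omega
    · have htri := hc.dist_triangle (u := pb.getVert 1) (v := v) (w := u)
      omega
    · obtain ⟨pu, hpu⟩ := hc.exists_walk_length_eq_dist v u
      have hl2 : pu.length = 2 := by omega
      have ha' : G.dist v (pu.getVert 1) = 1 := (geodesic_getVert hc pu hpu (by omega)).1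
      have hadj' : G.Adj (pu.getVert 1) u := by
        have hadj := pu.adj_getVert_succ (i := 1) (by omega)
        have hgu : pu.getVert 2 = u := pu.getVert_of_length_le (by omega)
        rwa [hgu] at hadj
      have d1 : G.dist (pu.getVert 1) u = 1 := SimpleGraph.dist_eq_one_iff_adj.mpr hadj'
      have t1 := hc.dist_triangle (u := pb.getVert 1) (v := v) (w := pu.getVert 1)
      have t2 := hc.dist_triangle (u := pb.getVert 1) (v := pu.getVert 1) (w := u)
      omega
    · rw [huw u h3]
      have t1 := hc.dist_triangle (u := pb.getVert 1) (v := pw.getVert 2) (w := w)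
      omega
    · rw [huz u h4]
      have t1 := hc.dist_triangle (u := pb.getVert 1) (v := w) (w := z)
      have t2 := hc.dist_triangle (u := pb.getVert 1) (v := pw.getVert 2) (w := w)
      omega
  obtain ⟨u, hu⟩ := h (pb.getVert 1)
  have := hfar u
  omega

lemma keyCard {V : Type*} [Finite V] {G : SimpleGraph V} (hc : G.Connected)
    (h : ∀ x : V, ∃ y, 4 ≤ G.dist x y) : 8 ≤ Nat.card V := by
  have : Fintype V := Fintype.ofFinite V
  rw [Nat.card_eq_fintype_card]
  have h7 := lemA hc h
  by_contra hlt
  push_neg at hlt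
  exact lemB hc (by omega) h

/-! ### The forward direction -/

lemma forward {n : ℕ} (G : SimpleGraph (Fin n)) (hG : G.Connected)
    (hA : (G.induce G.mannulus).Connected)
    (hP : (G.induce G.mperiphery).Connected)
    (fCA : G.induce G.mcenter ≃g G.induce G.mannulus)
    (fAP : G.induce G.mannulus ≃g G.induce G.mperiphery) :
    24 ≤ n ∧ 3 ∣ n := by
  haveI : Nonempty (Fin n) := hG.nonempty
  obtain ⟨⟨a, ha⟩⟩ := hA.nonempty
  have ha' : G.mrad < G.mecc a ∧ G.mecc a < G.mdiam := ha
  have hrd : G.mrad + 2 ≤ G.mdiam := by omega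
  obtain ⟨c, hc⟩ : ∃ c : Fin n, G.mecc c = G.mrad :=
    Nat.sInf_mem (Set.range_nonempty G.mecc)
  have hd2r : G.mdiam ≤ 2 * G.mrad := by
    obtain ⟨p, hp⟩ := exists_mecc_eq_mdiam (G := G)
    obtain ⟨u, hu⟩ := exists_dist_eq_mecc (G := G) p
    have t1 := hG.dist_triangle (u := p) (v := c) (w := u)
    have t2 : G.dist p c ≤ G.mrad := by
      rw [SimpleGraph.dist_comm, ← hc]; exact dist_le_mecc c p
    have t3 : G.dist c u ≤ G.mrad := by rw [← hc]; exact dist_le_mecc c u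
    omega
  have hd4 : 4 ≤ G.mdiam := by omega
  have hPecc : ∀ x : ↥G.mperiphery, ∃ y, 4 ≤ (G.induce G.mperiphery).dist x y := by
    intro x
    have hx : G.mecc x.1 = G.mdiam := x.2
    obtain ⟨u, hu⟩ := exists_dist_eq_mecc (G := G) x.1
    have hup : u ∈ G.mperiphery := by
      refine le_antisymm (mecc_le_mdiam u) ?_
      calc G.mdiam = G.dist u x.1 := by rw [SimpleGraph.dist_comm, hu, hx]
        _ ≤ G.mecc u := dist_le_mecc u x.1
    refine ⟨⟨u, hup⟩, ?_⟩
    calc (4 : ℕ) ≤ G.mdiam := hd4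
      _ = G.dist x.1 u := by rw [hu, hx]
      _ ≤ (G.induce G.mperiphery).dist x ⟨u, hup⟩ := induce_dist_ge hP x ⟨u, hup⟩
  have h8 : 8 ≤ Nat.card ↥G.mperiphery := keyCard hP hPecc
  have hcardCA : Nat.card ↥G.mcenter = Nat.card ↥G.mannulus := Nat.card_congr fCA.toEquiv
  have hcardAP : Nat.card ↥G.mannulus = Nat.card ↥G.mperiphery := Nat.card_congr fAP.toEquiv
  have hcover : G.mcenter ∪ (G.mannulus ∪ G.mperiphery) = Set.univ := by
    ext v
    simp only [Set.mem_union, Set.mem_univ, iff_true, SimpleGraph.mcenter,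
      SimpleGraph.mannulus, SimpleGraph.mperiphery, Set.mem_setOf_eq]
    have h1 := mrad_le_mecc (G := G) v
    have h2 := mecc_le_mdiam (G := G) v
    omega
  have hd1 : Disjoint G.mcenter (G.mannulus ∪ G.mperiphery) := by
    rw [Set.disjoint_left]
    rintro v hv (hv' | hv')
    · exact absurd hv (by simp only [SimpleGraph.mcenter, Set.mem_setOf_eq]; have := hv'.1; omega)
    · have h1 : G.mecc v = G.mrad := hv
      have h2 : G.mecc v = G.mdiam := hv'
      omega
  have hd2 : Disjoint G.mannulus G.mperiphery := by
    rw [Set.disjoint_left]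
    intro v hv hv'
    have h1 : G.mecc v < G.mdiam := hv.2
    have h2 : G.mecc v = G.mdiam := hv'
    omega
  have hsum : n = G.mcenter.ncard + (G.mannulus.ncard + G.mperiphery.ncard) := by
    have h1 : (Set.univ : Set (Fin n)).ncard = n := by
      rw [Set.ncard_univ]; simp
    have h2 : (Set.univ : Set (Fin n)).ncard
        = G.mcenter.ncard + (G.mannulus.ncard + G.mperiphery.ncard) := by
      rw [← hcover, Set.ncard_union_eq hd1 (Set.toFinite _) (Set.toFinite _),
        Set.ncard_union_eq hd2 (Set.toFinite _) (Set.toFinite _)]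
    exact h1.symm.trans h2
  rw [← Nat.card_coe_set_eq, ← Nat.card_coe_set_eq, ← Nat.card_coe_set_eq] at hsum
  constructor
  · omega
  · exact ⟨Nat.card ↥G.mperiphery, by omega⟩

/-! ### Transport along isomorphisms -/

lemma iso_dist_le (f : G ≃g G') (u v : V) : G'.dist (f u) (f v) ≤ G.dist u v := by
  by_cases hr : G.Reachable u v
  · obtain ⟨p, hp⟩ := hr.exists_walk_length_eq_dist
    have h := SimpleGraph.dist_le (p.map f.toHom)
    rwa [SimpleGraph.Walk.length_map, hp] at h
  · have : ¬ G'.Reachable (f u) (f v) := by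
      intro hr'
      have h2 := hr'.map f.symm.toHom
      rw [show f.symm.toHom (f u) = u by simp, show f.symm.toHom (f v) = v by simp] at h2
      exact hr h2
    simp [SimpleGraph.dist_eq_zero_of_not_reachable this,
      SimpleGraph.dist_eq_zero_of_not_reachable hr]

lemma iso_dist (f : G ≃g G') (u v : V) : G'.dist (f u) (f v) = G.dist u v := by
  refine le_antisymm (iso_dist_le f u v) ?_
  have h := iso_dist_le f.symm (f u) (f v)
  simpa using h

lemma iso_mecc (f : G ≃g G') (v : V) : G'.mecc (f v) = G.mecc v := by
  unfold SimpleGraph.mecc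
  congr 1
  ext n
  constructor
  · rintro ⟨u, rfl⟩
    refine ⟨f.symm u, ?_⟩
    rw [← iso_dist f v (f.symm u)]
    simp
  · rintro ⟨u, rfl⟩
    exact ⟨f u, iso_dist f v u⟩

lemma iso_range_mecc (f : G ≃g G') : Set.range G'.mecc = Set.range G.mecc := by
  ext n
  constructor
  · rintro ⟨u, rfl⟩
    refine ⟨f.symm u, ?_⟩
    rw [← iso_mecc f (f.symm u)]
    simp
  · rintro ⟨v, rfl⟩
    exact ⟨f v, iso_mecc f v⟩

lemma iso_mrad (f : G ≃g G') : G'.mrad = G.mrad := by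
  unfold SimpleGraph.mrad; rw [iso_range_mecc f]

lemma iso_mdiam (f : G ≃g G') : G'.mdiam = G.mdiam := by
  unfold SimpleGraph.mdiam; rw [iso_range_mecc f]

lemma iso_mcenter (f : G ≃g G') (v : V) : v ∈ G.mcenter ↔ f v ∈ G'.mcenter := by
  simp only [SimpleGraph.mcenter, Set.mem_setOf_eq, iso_mecc f, iso_mrad f]

lemma iso_mannulus (f : G ≃g G') (v : V) : v ∈ G.mannulus ↔ f v ∈ G'.mannulus := by
  simp only [SimpleGraph.mannulus, Set.mem_setOf_eq, iso_mecc f, iso_mrad f, iso_mdiam f]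

lemma iso_mperiphery (f : G ≃g G') (v : V) : v ∈ G.mperiphery ↔ f v ∈ G'.mperiphery := by
  simp only [SimpleGraph.mperiphery, Set.mem_setOf_eq, iso_mecc f, iso_mdiam f]

/-- Iso between induced subgraphs on corresponding sets. -/
def isoInduce (f : G ≃g G') {s : Set V} {t : Set W} (hst : ∀ v, v ∈ s ↔ f v ∈ t) :
    G.induce s ≃g G'.induce t where
  toEquiv := f.toEquiv.subtypeEquiv hst
  map_rel_iff' := by
    intro a b
    simp only [Equiv.subtypeEquiv_apply, SimpleGraph.comap_adj, Function.Embedding.coe_subtype]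
    exact f.map_adj_iff

/-- Iso between induced subgraphs on equal sets. -/
def isoOfSetEq {s t : Set V} (h : s = t) : G.induce s ≃g G.induce t :=
  isoInduce (RelIso.refl G.Adj) (by rw [h]; exact fun v => Iff.rfl)

/-! ### The construction -/

def cG (k : ℕ) : SimpleGraph (Fin k × Fin 3) where
  Adj a b := (a.2 = b.2 ∧ (a.1.val + 1 = b.1.val ∨ b.1.val + 1 = a.1.val)) ∨
    (a.2.val + b.2.val = 1) ∨ (a.1 = b.1 ∧ a.2.val + b.2.val = 3)
  symm := by
    constructor
    rintro a b (⟨h1, h2⟩ | h | ⟨h1, h2⟩)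
    · exact Or.inl ⟨h1.symm, h2.symm⟩
    · exact Or.inr (Or.inl (by omega))
    · exact Or.inr (Or.inr ⟨h1.symm, by omega⟩)
  loopless := by
    constructor
    rintro a (⟨_, h⟩ | h | ⟨_, h⟩) <;> omega

variable {k : ℕ}

lemma adj_iff (a b : Fin k × Fin 3) : (cG k).Adj a b ↔
    ((a.2.val = b.2.val ∧ (a.1.val + 1 = b.1.val ∨ b.1.val + 1 = a.1.val)) ∨
    (a.2.val + b.2.val = 1) ∨ (a.1.val = b.1.val ∧ a.2.val + b.2.val = 3)) := by
  show ((a.2 = b.2 ∧ _) ∨ _ ∨ (a.1 = b.1 ∧ _)) ↔ _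
  rw [Fin.ext_iff (a := a.2), Fin.ext_iff (a := a.1)]

lemma fin3 (l : Fin 3) : l = 0 ∨ l = 1 ∨ l = 2 := by
  fin_cases l <;> simp

lemma pne {i j : Fin k} {l m : Fin 3} (h : l.val ≠ m.val ∨ i.val ≠ j.val) :
    (i, l) ≠ (j, m) := by
  intro he
  have h1 := congrArg (fun p => (Prod.fst p).val) he
  have h2 := congrArg (fun p => (Prod.snd p).val) he
  simp only at h1 h2
  omega

lemma adj01 (i j : Fin k) : (cG k).Adj (i, 0) (j, 1) := by
  rw [adj_iff]; simp

lemma adj12 (i : Fin k) : (cG k).Adj (i, 1) (i, 2) := by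
  rw [adj_iff]; simp

lemma adj_same_level (i j : Fin k) (ℓ : Fin 3) :
    (cG k).Adj (i, ℓ) (j, ℓ) ↔ (i.val + 1 = j.val ∨ j.val + 1 = i.val) := by
  rw [adj_iff]
  have := ℓ.isLt
  dsimp only
  omega

lemma cG_connected (hk : 8 ≤ k) : (cG k).Connected := by
  have hne : Nonempty (Fin k × Fin 3) := ⟨(⟨0, by omega⟩, 0)⟩
  rw [SimpleGraph.connected_iff]
  refine ⟨?_, hne⟩
  have hub : ∀ a : Fin k × Fin 3, (cG k).Reachable a (⟨0, by omega⟩, 0) := by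
    rintro ⟨i, l⟩
    rcases fin3 l with rfl | rfl | rfl
    · exact Walk.reachable (Walk.cons (adj01 i ⟨0, by omega⟩)
        (Walk.cons ((adj01 ⟨0, by omega⟩ ⟨0, by omega⟩).symm) Walk.nil))
    · exact ((adj01 ⟨0, by omega⟩ i).symm).reachable
    · exact Walk.reachable (Walk.cons ((adj12 i).symm)
        (Walk.cons ((adj01 ⟨0, by omega⟩ i).symm) Walk.nil))
  intro a b
  exact (hub a).trans (hub b).symm

lemma ub0 (i : Fin k) (u : Fin k × Fin 3) : (cG k).dist (i, 0) u ≤ 2 := by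
  obtain ⟨j, l⟩ := u
  rcases fin3 l with rfl | rfl | rfl
  · have h := SimpleGraph.dist_le (Walk.cons (adj01 i i) (Walk.cons ((adj01 j i).symm) Walk.nil))
    simp only [Walk.length_cons, Walk.length_nil] at h
    omega
  · have h := SimpleGraph.dist_le (Walk.cons (adj01 i j) Walk.nil)
    simp only [Walk.length_cons, Walk.length_nil] at h
    omega
  · have h := SimpleGraph.dist_le (Walk.cons (adj01 i j) (Walk.cons (adj12 j) Walk.nil))
    simp only [Walk.length_cons, Walk.length_nil] at h
    omega

lemma ub1 (i : Fin k) (u : Fin k × Fin 3) : (cG k).dist (i, 1) u ≤ 3 := by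
  obtain ⟨j, l⟩ := u
  rcases fin3 l with rfl | rfl | rfl
  · have h := SimpleGraph.dist_le (Walk.cons ((adj01 j i).symm) Walk.nil)
    simp only [Walk.length_cons, Walk.length_nil] at h
    omega
  · have h := SimpleGraph.dist_le (Walk.cons ((adj01 i i).symm) (Walk.cons (adj01 i j) Walk.nil))
    simp only [Walk.length_cons, Walk.length_nil] at h
    omega
  · have h := SimpleGraph.dist_le (Walk.cons ((adj01 i i).symm) (Walk.cons (adj01 i j) (Walk.cons (adj12 j) Walk.nil)))
    simp only [Walk.length_cons, Walk.length_nil] at h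
    omega

lemma ub2 (i : Fin k) (u : Fin k × Fin 3) : (cG k).dist (i, 2) u ≤ 4 := by
  obtain ⟨j, l⟩ := u
  rcases fin3 l with rfl | rfl | rfl
  · have h := SimpleGraph.dist_le (Walk.cons ((adj12 i).symm) (Walk.cons ((adj01 j i).symm) Walk.nil))
    simp only [Walk.length_cons, Walk.length_nil] at h
    omega
  · have h := SimpleGraph.dist_le (Walk.cons ((adj12 i).symm) (Walk.cons ((adj01 i i).symm) (Walk.cons (adj01 i j) Walk.nil)))
    simp only [Walk.length_cons, Walk.length_nil] at h
    omega
  · have h := SimpleGraph.dist_le (Walk.cons ((adj12 i).symm) (Walk.cons ((adj01 i i).symm) (Walk.cons (adj01 i j) (Walk.cons (adj12 j) Walk.nil))))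
    simp only [Walk.length_cons, Walk.length_nil] at h
    omega

lemma dist13 (hk : 8 ≤ k) {i j : Fin k}
    (hsep : i.val + 2 ≤ j.val ∨ j.val + 2 ≤ i.val) :
    3 ≤ (cG k).dist (i, 1) (j, 2) := by
  refine three_le_dist (cG_connected hk) (pne (by omega)) ?_ ?_
  · rw [adj_iff]; simp only; omega
  · intro x hx hx2
    rw [adj_iff] at hx hx2
    simp only at hx hx2
    omega

lemma dist22 (hk : 8 ≤ k) {i j : Fin k}
    (hsep : i.val + 3 ≤ j.val ∨ j.val + 3 ≤ i.val) :
    3 ≤ (cG k).dist (i, 2) (j, 2) := by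
  refine three_le_dist (cG_connected hk) (pne (by omega)) ?_ ?_
  · rw [adj_iff]; simp only; omega
  · intro x hx hx2
    rw [adj_iff] at hx hx2
    simp only at hx hx2
    omega

lemma dist24 (hk : 8 ≤ k) {i j : Fin k}
    (hsep : i.val + 4 ≤ j.val ∨ j.val + 4 ≤ i.val) :
    4 ≤ (cG k).dist (i, 2) (j, 2) := by
  have h3 : (3 : ℕ) + 1 = 4 := rfl
  rw [← h3]
  refine succ_le_dist (cG_connected hk) (pne (by omega)) ?_
  intro x hx
  rw [adj_iff] at hx
  simp only at hx
  rcases hx with ⟨hx2, hpad⟩ | hx1 | ⟨hxi, hx2⟩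
  · have hx' : x = (x.1, (2 : Fin 3)) := by
      rw [Prod.ext_iff]
      exact ⟨rfl, Fin.ext (by simpa using hx2.symm)⟩
    rw [hx']
    exact dist22 hk (by omega)
  · omega
  · have hx' : x = (x.1, (1 : Fin 3)) := by
      rw [Prod.ext_iff]
      exact ⟨rfl, Fin.ext (by simp only; omega)⟩
    rw [hx']
    exact dist13 hk (by omega)

lemma sep_exists (hk : 8 ≤ k) (i : Fin k) {m : ℕ} (hm : m ≤ 4) :
    ∃ j : Fin k, i.val + m ≤ j.val ∨ j.val + m ≤ i.val := by
  have hi := i.isLt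
  by_cases h : i.val + m < k
  · exact ⟨⟨i.val + m, h⟩, Or.inl (le_refl _)⟩
  · exact ⟨⟨i.val - m, by omega⟩, Or.inr (by simp only; omega)⟩

lemma mecc_level (hk : 8 ≤ k) (a : Fin k × Fin 3) : (cG k).mecc a = a.2.val + 2 := by
  haveI : Nonempty (Fin k × Fin 3) := ⟨(⟨0, by omega⟩, 0)⟩
  obtain ⟨i, l⟩ := a
  rcases fin3 l with rfl | rfl | rfl
  · refine mecc_eq _ _ (ub0 i) ⟨(i, 2), ?_⟩
    refine two_le_dist (cG_connected hk) (pne (by omega)) ?_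
    rw [adj_iff]; simp only; omega
  · obtain ⟨j, hj⟩ := sep_exists hk i (m := 2) (by omega)
    exact mecc_eq _ _ (ub1 i) ⟨(j, 2), dist13 hk hj⟩
  · obtain ⟨j, hj⟩ := sep_exists hk i (m := 4) (by omega)
    exact mecc_eq _ _ (ub2 i) ⟨(j, 2), dist24 hk hj⟩

lemma cG_mrad (hk : 8 ≤ k) : (cG k).mrad = 2 := by
  refine le_antisymm (Nat.sInf_le ⟨(⟨0, by omega⟩, 0), by rw [mecc_level hk]; rfl⟩) ?_
  refine le_csInf ⟨_, ⟨(⟨0, by omega⟩, 0), rfl⟩⟩ ?_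
  rintro _ ⟨a, rfl⟩
  rw [mecc_level hk]
  omega

lemma cG_mdiam (hk : 8 ≤ k) : (cG k).mdiam = 4 := by
  refine le_antisymm ?_ ?_
  · refine csSup_le ⟨_, ⟨(⟨0, by omega⟩, 0), rfl⟩⟩ ?_
    rintro _ ⟨a, rfl⟩
    rw [mecc_level hk]
    have := a.2.isLt
    omega
  · refine le_csSup (Set.finite_range _).bddAbove ⟨(⟨0, by omega⟩, 2), ?_⟩
    rw [mecc_level hk]
    rfl

lemma cG_mcenter (hk : 8 ≤ k) : (cG k).mcenter = {a : Fin k × Fin 3 | a.2 = 0} := by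
  ext a
  simp only [SimpleGraph.mcenter, Set.mem_setOf_eq, cG_mrad hk, mecc_level hk, Fin.ext_iff]
  simp only [Fin.val_zero]
  omega

lemma cG_mannulus (hk : 8 ≤ k) : (cG k).mannulus = {a : Fin k × Fin 3 | a.2 = 1} := by
  ext a
  simp only [SimpleGraph.mannulus, Set.mem_setOf_eq, cG_mrad hk, cG_mdiam hk,
    mecc_level hk, Fin.ext_iff]
  simp only [Fin.val_one]
  omega

lemma cG_mperiphery (hk : 8 ≤ k) : (cG k).mperiphery = {a : Fin k × Fin 3 | a.2 = 2} := by
  ext a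
  simp only [SimpleGraph.mperiphery, Set.mem_setOf_eq, cG_mdiam hk, mecc_level hk, Fin.ext_iff]
  simp only [Fin.val_two]
  omega

lemma level_connected (hk : 8 ≤ k) (ℓ : Fin 3) :
    ((cG k).induce {a : Fin k × Fin 3 | a.2 = ℓ}).Connected := by
  rw [SimpleGraph.connected_iff]
  refine ⟨?_, ⟨⟨(⟨0, by omega⟩, ℓ), rfl⟩⟩⟩
  have key : ∀ m : ℕ, ∀ hm : m < k,
      ((cG k).induce {a : Fin k × Fin 3 | a.2 = ℓ}).Reachable
        ⟨(⟨0, by omega⟩, ℓ), rfl⟩ ⟨(⟨m, hm⟩, ℓ), rfl⟩ := by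
    intro m
    induction m with
    | zero => intro hm; exact Reachable.refl _
    | succ p ih =>
      intro hm
      refine (ih (by omega)).trans (SimpleGraph.Adj.reachable ?_)
      show (cG k).Adj (⟨p, by omega⟩, ℓ) (⟨p + 1, hm⟩, ℓ)
      rw [adj_same_level]
      dsimp only
      omega
  rintro ⟨⟨i, l⟩, hx⟩ ⟨⟨j, l'⟩, hy⟩
  have hx' : l = ℓ := hx
  have hy' : l' = ℓ := hy
  subst hx' hy'
  exact (key i.val i.isLt).symm.trans (key j.val j.isLt)

def levelIso (ℓ₁ ℓ₂ : Fin 3) :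
    (cG k).induce {a : Fin k × Fin 3 | a.2 = ℓ₁} ≃g
      (cG k).induce {a : Fin k × Fin 3 | a.2 = ℓ₂} where
  toEquiv :=
    { toFun := fun x => ⟨(x.1.1, ℓ₂), rfl⟩
      invFun := fun y => ⟨(y.1.1, ℓ₁), rfl⟩
      left_inv := fun x => Subtype.ext (Prod.ext rfl x.2.symm)
      right_inv := fun y => Subtype.ext (Prod.ext rfl y.2.symm) }
  map_rel_iff' := by
    intro a b
    show (cG k).Adj (a.1.1, ℓ₂) (b.1.1, ℓ₂) ↔ (cG k).Adj ↑a ↑b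
    have ha : (↑a : Fin k × Fin 3) = (a.1.1, ℓ₁) := Prod.ext rfl a.2
    have hb : (↑b : Fin k × Fin 3) = (b.1.1, ℓ₁) := Prod.ext rfl b.2
    rw [ha, hb, adj_same_level, adj_same_level]

end MetricSubgraphsAux

theorem exists_graph_with_pairwise_isomorphic_connected_metric_subgraphs_iff
    (n : ℕ) (hn : 0 < n) :
    (∃ G : SimpleGraph (Fin n), G.Connected ∧
        (G.induce G.mcenter).Connected ∧ (G.induce G.mannulus).Connected ∧
        (G.induce G.mperiphery).Connected ∧
        Nonempty (G.induce G.mcenter ≃g G.induce G.mannulus) ∧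
        Nonempty (G.induce G.mannulus ≃g G.induce G.mperiphery) ∧
        Nonempty (G.induce G.mcenter ≃g G.induce G.mperiphery)) ↔
      (24 ≤ n ∧ 3 ∣ n) := by
  constructor
  · rintro ⟨G, hG, hC, hA, hP, ⟨fCA⟩, ⟨fAP⟩, ⟨fCP⟩⟩
    exact MetricSubgraphsAux.forward G hG hA hP fCA fAP
  · rintro ⟨h24, hdvd⟩
    obtain ⟨k, rfl⟩ : ∃ k, n = k * 3 := ⟨n / 3, by omega⟩
    have hk : 8 ≤ k := by omega
    let e : Fin (k * 3) ≃ Fin k × Fin 3 := finProdFinEquiv.symm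
    let G : SimpleGraph (Fin (k * 3)) := SimpleGraph.comap (⇑e) (MetricSubgraphsAux.cG k)
    have f : G ≃g MetricSubgraphsAux.cG k := ⟨e, Iff.rfl⟩
    have isoC : G.induce G.mcenter ≃g
        (MetricSubgraphsAux.cG k).induce {a : Fin k × Fin 3 | a.2 = 0} :=
      (MetricSubgraphsAux.isoInduce f (MetricSubgraphsAux.iso_mcenter f)).trans
        (MetricSubgraphsAux.isoOfSetEq (MetricSubgraphsAux.cG_mcenter hk))
    have isoA : G.induce G.mannulus ≃g
        (MetricSubgraphsAux.cG k).induce {a : Fin k × Fin 3 | a.2 = 1} :=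
      (MetricSubgraphsAux.isoInduce f (MetricSubgraphsAux.iso_mannulus f)).trans
        (MetricSubgraphsAux.isoOfSetEq (MetricSubgraphsAux.cG_mannulus hk))
    have isoP : G.induce G.mperiphery ≃g
        (MetricSubgraphsAux.cG k).induce {a : Fin k × Fin 3 | a.2 = 2} :=
      (MetricSubgraphsAux.isoInduce f (MetricSubgraphsAux.iso_mperiphery f)).trans
        (MetricSubgraphsAux.isoOfSetEq (MetricSubgraphsAux.cG_mperiphery hk))
    refine ⟨G, ?_, ?_, ?_, ?_, ?_, ?_, ?_⟩
    · exact f.connected_iff.mpr (MetricSubgraphsAux.cG_connected hk)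
    · exact isoC.connected_iff.mpr (MetricSubgraphsAux.level_connected hk 0)
    · exact isoA.connected_iff.mpr (MetricSubgraphsAux.level_connected hk 1)
    · exact isoP.connected_iff.mpr (MetricSubgraphsAux.level_connected hk 2)
    · exact ⟨isoC.trans ((MetricSubgraphsAux.levelIso 0 1).trans isoA.symm)⟩
    · exact ⟨isoA.trans ((MetricSubgraphsAux.levelIso 1 2).trans isoP.symm)⟩
    · exact ⟨isoC.trans ((MetricSubgraphsAux.levelIso 0 2).trans isoP.symm)⟩
end
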